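/- Let A₁ ∈ ℂ^{m×p}, B₁ ∈ ℂ^{q×n}, C₁ ∈ ℂ^{m×r}, D₁ ∈ ℂ^{s×n}, E₁ ∈ ℂ^{m×n}. The equation A₁X₁B₁ + C₁X₂D₁ = E₁ is solvable if and only if the following four rank equalities hold: rank[A₁ E₁ C₁] = rank[A₁ C₁]; rank of the vertical block [B₁; E₁; D₁] equals rank of [B₁; D₁]; rank of the 2×2 block matrix [[A₁, E₁],[0, D₁]] equals rank(A₁) + rank(D₁); and rank of [[B₁, 0],[E₁, C₁]] equals rank(B₁) + rank(C₁). -/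

import Mathlib

open Matrix

open Module Submodule LinearMap

section Aux

variable {K : Type*} [Field K]

/-- Inside any submodule `P`, we can find a complement `U` of `p0 ⊓ P`. -/
lemma exists_compl_inter {V : Type*} [AddCommGroup V] [Module K V]
    (P p0 : Submodule K V) :
    ∃ U : Submodule K V, U ≤ P ∧ P ≤ (p0 ⊓ P) ⊔ U ∧ p0 ⊓ U = ⊥ := by
  obtain ⟨U', hU'⟩ := Submodule.exists_isCompl (Submodule.comap P.subtype p0)
  refine ⟨Submodule.map P.subtype U', Submodule.map_subtype_le _ _, ?_, ?_⟩
  · intro x hx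
    obtain ⟨u, v, huv, -⟩ := Submodule.existsUnique_add_of_isCompl hU' ⟨x, hx⟩
    have : (u : V) + (v : V) = x := congrArg Subtype.val huv
    refine this ▸ Submodule.add_mem_sup ?_ ?_
    · exact Submodule.mem_inf.2 ⟨u.2, (u : P).2⟩
    · exact ⟨(v : P), v.2, rfl⟩
  · rw [eq_bot_iff]
    rintro x ⟨hx0, hxU⟩
    obtain ⟨v, hv, rfl⟩ := hxU
    have hv0 : v ∈ Submodule.comap P.subtype p0 := hx0
    have hb : v = 0 := by
      have hmem : v ∈ (Submodule.comap P.subtype p0) ⊓ U' := ⟨hv0, hv⟩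
      rw [hU'.inf_eq_bot] at hmem
      simpa using hmem
    simp [hb]

variable {M N P Q : Type*} [AddCommGroup M] [Module K M] [AddCommGroup N] [Module K N]
  [AddCommGroup P] [Module K P] [AddCommGroup Q] [Module K Q]

/-- Factor a map through `B` on the right. -/
lemma factor_through_right (B : N →ₗ[K] Q) (f : N →ₗ[K] M)
    (h : ker B ≤ ker f) : ∃ g : Q →ₗ[K] M, g ∘ₗ B = f := by
  obtain ⟨σ, hσ⟩ := B.rangeRestrict.exists_rightInverse_of_surjective
    (LinearMap.range_eq_top.2 B.surjective_rangeRestrict)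
  obtain ⟨g, hg⟩ := LinearMap.exists_extend (f ∘ₗ σ)
  refine ⟨g, ?_⟩
  ext x
  have h1 : B.rangeRestrict (σ (B.rangeRestrict x)) = B.rangeRestrict x := by
    exact congrFun (congrArg DFunLike.coe hσ) _
  have h2 : B (σ (B.rangeRestrict x)) = B x := congrArg Subtype.val h1
  have h3 : σ (B.rangeRestrict x) - x ∈ ker B := by
    simp [LinearMap.mem_ker, map_sub, h2]
  have h4 : f (σ (B.rangeRestrict x)) = f x := by
    have := h h3
    rw [LinearMap.mem_ker, map_sub, sub_eq_zero] at this
    exact this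
  have h5 : g (B x) = g ((range B).subtype (B.rangeRestrict x)) := rfl
  simp only [LinearMap.comp_apply, h5]
  rw [← LinearMap.comp_apply g, hg]
  simpa using h4

/-- Factor a map through `A` on the left. -/
lemma factor_through_left (A : P →ₗ[K] M) (f : N →ₗ[K] M)
    (h : range f ≤ range A) : ∃ g : N →ₗ[K] P, A ∘ₗ g = f := by
  obtain ⟨σ, hσ⟩ := A.rangeRestrict.exists_rightInverse_of_surjective
    (LinearMap.range_eq_top.2 A.surjective_rangeRestrict)
  refine ⟨σ ∘ₗ (f.codRestrict (range A) fun x => h (LinearMap.mem_range_self f x)), ?_⟩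
  ext x
  have h1 : A.rangeRestrict (σ ⟨f x, h (LinearMap.mem_range_self f x)⟩) =
      ⟨f x, h (LinearMap.mem_range_self f x)⟩ := congrFun (congrArg DFunLike.coe hσ) _
  exact congrArg Subtype.val h1

lemma factor_both (A : P →ₗ[K] M) (B : N →ₗ[K] Q) (f : N →ₗ[K] M)
    (hk : ker B ≤ ker f) (hr : range f ≤ range A) :
    ∃ X : Q →ₗ[K] P, A ∘ₗ X ∘ₗ B = f := by
  obtain ⟨σ, hσ⟩ := A.rangeRestrict.exists_rightInverse_of_surjective
    (LinearMap.range_eq_top.2 A.surjective_rangeRestrict)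
  set g : N →ₗ[K] P :=
    σ ∘ₗ (f.codRestrict (range A) fun x => hr (LinearMap.mem_range_self f x)) with hgdef
  have hAg : A ∘ₗ g = f := by
    ext x
    have h1 : A.rangeRestrict (σ ⟨f x, hr (LinearMap.mem_range_self f x)⟩) =
        ⟨f x, hr (LinearMap.mem_range_self f x)⟩ := congrFun (congrArg DFunLike.coe hσ) _
    exact congrArg Subtype.val h1
  have hkg : ker B ≤ ker g := by
    intro x hx
    have : f x = 0 := hk hx
    simp only [LinearMap.mem_ker, hgdef, LinearMap.comp_apply, LinearMap.codRestrict_apply]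
    have : (⟨f x, hr (LinearMap.mem_range_self f x)⟩ : range A) = 0 := by
      exact Subtype.ext this
    rw [show (f.codRestrict (range A) fun x => hr (LinearMap.mem_range_self f x)) x
        = ⟨f x, hr (LinearMap.mem_range_self f x)⟩ from rfl, this, map_zero]
  obtain ⟨X, hX⟩ := factor_through_right B g hkg
  refine ⟨X, ?_⟩
  rw [show A ∘ₗ X ∘ₗ B = A ∘ₗ (X ∘ₗ B) from rfl, hX, hAg]

/-- The key abstract characterization of solvability. -/
lemma solvable_iff_subspaces {M N P Q R S : Type*}
    [AddCommGroup M] [Module K M] [AddCommGroup N] [Module K N]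
    [AddCommGroup P] [Module K P] [AddCommGroup Q] [Module K Q]
    [AddCommGroup R] [Module K R] [AddCommGroup S] [Module K S]
    (A : P →ₗ[K] M) (B : N →ₗ[K] Q) (C : R →ₗ[K] M) (D : N →ₗ[K] S) (E : N →ₗ[K] M) :
    (∃ (X : Q →ₗ[K] P) (Y : S →ₗ[K] R), A ∘ₗ X ∘ₗ B + C ∘ₗ Y ∘ₗ D = E) ↔
      (range E ≤ range A ⊔ range C ∧ ker B ⊓ ker D ≤ ker E ∧
       (ker D).map E ≤ range A ∧ (ker B).map E ≤ range C) := by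
  constructor
  · rintro ⟨X, Y, hXY⟩
    have hE : ∀ x, E x = A (X (B x)) + C (Y (D x)) := by
      intro x
      have := congrFun (congrArg DFunLike.coe hXY) x
      simpa using this.symm
    refine ⟨?_, ?_, ?_, ?_⟩
    · rintro - ⟨x, rfl⟩
      rw [hE x]
      exact Submodule.add_mem_sup (LinearMap.mem_range_self _ _) (LinearMap.mem_range_self _ _)
    · rintro x ⟨hxB, hxD⟩
      rw [LinearMap.mem_ker] at *
      rw [hE x, LinearMap.mem_ker.1 hxB, LinearMap.mem_ker.1 hxD]
      simp
    · rintro - ⟨x, hx, rfl⟩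
      rw [hE x, LinearMap.mem_ker.1 hx]
      simpa using LinearMap.mem_range_self _ _
    · rintro - ⟨x, hx, rfl⟩
      rw [hE x, LinearMap.mem_ker.1 hx]
      simpa using LinearMap.mem_range_self _ _
  · rintro ⟨h1, h2, h3, h4⟩
    -- complement U₂ of (ker B ⊓ ker D) inside ker D
    obtain ⟨U₂, hU₂D, hDle, hU₂B⟩ := exists_compl_inter (ker D) (ker B)
    -- complement W' of ker B ⊔ U₂
    obtain ⟨W', hW'⟩ := Submodule.exists_isCompl (ker B ⊔ U₂)
    set W : Submodule K N := U₂ ⊔ W' with hWdef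
    have hcompl : IsCompl (ker B) W := by
      constructor
      · rw [disjoint_iff]
        rw [eq_bot_iff]
        rintro x ⟨hxB, hxW⟩
        obtain ⟨u, hu, w, hw, rfl⟩ := Submodule.mem_sup.1 hxW
        have hwmem : w ∈ ker B ⊔ U₂ := by
          have hw' : w = (u + w) - u := by abel
          rw [hw']
          exact Submodule.sub_mem _ (Submodule.mem_sup_left hxB) (Submodule.mem_sup_right hu)
        have hw0 : w = 0 := by
          have hm : w ∈ (ker B ⊔ U₂) ⊓ W' := ⟨hwmem, hw⟩
          rwa [hW'.inf_eq_bot, Submodule.mem_bot] at hm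
        subst hw0
        have huB : u ∈ ker B := by simpa using hxB
        have hm3 : u ∈ ker B ⊓ U₂ := ⟨huB, hu⟩
        have hu0 : u = 0 := by rwa [hU₂B, Submodule.mem_bot] at hm3
        simp [hu0]
      · rw [codisjoint_iff, eq_top_iff]
        intro x _hx
        have hx2 : x ∈ (ker B ⊔ U₂) ⊔ W' := by rw [hW'.sup_eq_top]; trivial
        have hrw : (ker B ⊔ U₂) ⊔ W' = ker B ⊔ W := by
          rw [hWdef, sup_assoc]
        rwa [hrw] at hx2
    -- the projection π onto W along ker B
    set π : N →ₗ[K] N := W.subtype ∘ₗ (W.projectionOnto (ker B) hcompl.symm) with hπdef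
    have hπ_ker : ∀ x ∈ ker B, π x = 0 := by
      intro x hx
      simp [hπdef, Submodule.projectionOnto_apply_of_mem_right hcompl.symm hx]
    have hπ_sub : ∀ x, x - π x ∈ ker B := by
      intro x
      have hx : x - π x = ((ker B).projectionOnto W hcompl x : N) := by
        have h' := Submodule.projection_add_projection_eq_self hcompl x
        rw [hπdef]
        simp only [LinearMap.comp_apply, Submodule.subtype_apply]
        rw [sub_eq_iff_eq_add]
        exact h'.symm
      rw [hx]
      exact ((ker B).projectionOnto W hcompl x).2
    have hπ_W : ∀ x ∈ W, π x = x := by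
      intro x hx
      simp [hπdef, Submodule.projection_apply_of_mem_left hcompl.symm hx]
    -- complement C' of (range A ⊓ range C) inside range C
    obtain ⟨C', hC'C, hCle, hC'A⟩ := exists_compl_inter (range C) (range A)
    obtain ⟨T, hT⟩ := Submodule.exists_isCompl (range A ⊔ range C)
    have hcompl2 : IsCompl (range A) (C' ⊔ T) := by
      constructor
      · rw [disjoint_iff, eq_bot_iff]
        intro x hx
        obtain ⟨hxA, hxCT⟩ := hx
        obtain ⟨c, hc, t, ht, rfl⟩ := Submodule.mem_sup.1 hxCT
        have htmem : t ∈ range A ⊔ range C := by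
          have hr : t = (c + t) - c := by abel
          rw [hr]
          exact Submodule.sub_mem _ (Submodule.mem_sup_left hxA)
            (Submodule.mem_sup_right (hC'C hc))
        have ht0 : t = 0 := by
          have hm : t ∈ (range A ⊔ range C) ⊓ T := ⟨htmem, ht⟩
          rwa [hT.inf_eq_bot, Submodule.mem_bot] at hm
        subst ht0
        have hcA : c ∈ range A := by simpa using hxA
        have hm2 : c ∈ range A ⊓ C' := ⟨hcA, hc⟩
        have hc0 : c = 0 := by rwa [hC'A, Submodule.mem_bot] at hm2
        simp [hc0]
      · rw [codisjoint_iff, eq_top_iff]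
        intro x _hx
        have hx : x ∈ (range A ⊔ range C) ⊔ T := by rw [hT.sup_eq_top]; trivial
        have : (range A ⊔ range C) ⊔ T ≤ range A ⊔ (C' ⊔ T) := by
          apply sup_le
          · apply sup_le le_sup_left
            calc range C ≤ (range A ⊓ range C) ⊔ C' := hCle
              _ ≤ range A ⊔ (C' ⊔ T) := sup_le (le_trans inf_le_left le_sup_left)
                  (le_trans le_sup_left le_sup_right)
          · exact le_trans le_sup_right le_sup_right
        exact this hx
    set p : M →ₗ[K] M :=
      (range A).subtype ∘ₗ ((range A).projectionOnto (C' ⊔ T) hcompl2) with hpdef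
    have hp_mem : ∀ v, p v ∈ range A := fun v => ((range A).projectionOnto _ hcompl2 v).2
    have hp_id : ∀ v ∈ range A, p v = v := by
      intro v hv
      simp [hpdef, Submodule.projection_apply_of_mem_left hcompl2 hv]
    have hp_sub : ∀ v ∈ range A ⊔ range C, v - p v ∈ range C := by
      intro v hv
      have hsub : v - p v ∈ C' ⊔ T := by
        have h' := Submodule.projection_add_projection_eq_self hcompl2 v
        have hv' : v - p v = ((C' ⊔ T).projectionOnto (range A) hcompl2.symm v : M) := by
          rw [hpdef]; simp only [LinearMap.comp_apply, Submodule.subtype_apply]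
          rw [sub_eq_iff_eq_add']
          exact h'.symm
        rw [hv']
        exact ((C' ⊔ T).projectionOnto _ hcompl2.symm v).2
      have hmem2 : v - p v ∈ range A ⊔ range C :=
        Submodule.sub_mem _ hv (Submodule.mem_sup_left (hp_mem v))
      obtain ⟨c, hc, t, ht, hct⟩ := Submodule.mem_sup.1 hsub
      have htmem : t ∈ range A ⊔ range C := by
        have hr : t = (v - p v) - c := by rw [← hct]; abel
        rw [hr]
        exact Submodule.sub_mem _ hmem2 (Submodule.mem_sup_right (hC'C hc))
      have ht0 : t = 0 := by
        have hm : t ∈ (range A ⊔ range C) ⊓ T := ⟨htmem, ht⟩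
        rwa [hT.inf_eq_bot, Submodule.mem_bot] at hm
      rw [← hct, ht0, add_zero]
      exact hC'C hc
    -- define f and g
    set f : N →ₗ[K] M := p ∘ₗ E ∘ₗ π with hfdef
    have hf_ker : ker B ≤ ker f := by
      intro x hx
      simp [hfdef, LinearMap.mem_ker, hπ_ker x hx]
    have hf_range : range f ≤ range A := by
      rintro - ⟨x, rfl⟩
      exact hp_mem _
    set g : N →ₗ[K] M := E - f with hgdef
    have hg_ker : ker D ≤ ker g := by
      intro x hx
      obtain ⟨k, hk, u, hu, hku⟩ := Submodule.mem_sup.1 (hDle hx)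
      have hkE : E k = 0 := h2 ⟨(Submodule.mem_inf.1 hk).1, (Submodule.mem_inf.1 hk).2⟩
      have hπx : π x = u := by
        rw [← hku, map_add, hπ_ker k (Submodule.mem_inf.1 hk).1, zero_add,
          hπ_W u (Submodule.mem_sup_left hu)]
      have hEu_A : E u ∈ range A := h3 ⟨u, hU₂D hu, rfl⟩
      have hEx : E x = E u := by rw [← hku, map_add, hkE, zero_add]
      simp only [hgdef, LinearMap.mem_ker, LinearMap.sub_apply, hfdef,
        LinearMap.comp_apply, hπx, hEx]
      rw [hp_id _ hEu_A, sub_self]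
    have hg_range : range g ≤ range C := by
      rintro - ⟨x, rfl⟩
      have hgx : g x = E (x - π x) + (E (π x) - p (E (π x))) := by
        simp only [hgdef, LinearMap.sub_apply, hfdef, LinearMap.comp_apply, map_sub]
        abel
      rw [hgx]
      refine Submodule.add_mem _ ?_ ?_
      · exact h4 ⟨x - π x, hπ_sub x, rfl⟩
      · exact hp_sub _ (h1 (LinearMap.mem_range_self E _))
    obtain ⟨X, hX⟩ := factor_both A B f hf_ker hf_range
    obtain ⟨Y, hY⟩ := factor_both C D g hg_ker hg_range
    exact ⟨X, Y, by rw [hX, hY, hgdef]; abel⟩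

end Aux


section RankLemmas

open Module

lemma range_fromColumns' {m' n₁ n₂ : Type*} [Fintype n₁] [Fintype n₂]
    (A : Matrix m' n₁ ℂ) (C : Matrix m' n₂ ℂ) :
    range (fromCols A C).mulVecLin = range A.mulVecLin ⊔ range C.mulVecLin := by
  apply le_antisymm
  · rintro - ⟨v, rfl⟩
    have hv : v = Sum.elim (v ∘ Sum.inl) (v ∘ Sum.inr) := by
      funext i; cases i <;> rfl
    rw [mulVecLin_apply, hv, fromCols_mulVec_sumElim]
    exact Submodule.add_mem_sup ⟨v ∘ Sum.inl, rfl⟩ ⟨v ∘ Sum.inr, rfl⟩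
  · apply sup_le
    · rintro - ⟨v, rfl⟩
      exact ⟨Sum.elim v 0, by simp [mulVecLin_apply]⟩
    · rintro - ⟨v, rfl⟩
      exact ⟨Sum.elim 0 v, by simp [mulVecLin_apply]⟩

lemma ker_fromRows' {n' m₁ m₂ : Type*} [Fintype n'] (B : Matrix m₁ n' ℂ) (D : Matrix m₂ n' ℂ) :
    ker (fromRows B D).mulVecLin = ker B.mulVecLin ⊓ ker D.mulVecLin := by
  ext v
  simp only [LinearMap.mem_ker, Submodule.mem_inf, mulVecLin_apply, fromRows_mulVec]
  constructor
  · intro h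
    exact ⟨funext fun i => congrFun h (Sum.inl i), funext fun i => congrFun h (Sum.inr i)⟩
  · rintro ⟨h1, h2⟩
    funext i
    cases i with
    | inl i => exact congrFun h1 i
    | inr i => exact congrFun h2 i

lemma rank_L1 {m n p r : ℕ} (A : Matrix (Fin m) (Fin p) ℂ) (E : Matrix (Fin m) (Fin n) ℂ)
    (C : Matrix (Fin m) (Fin r) ℂ) :
    (fromCols A (fromCols E C)).rank = (fromCols A C).rank ↔
      range E.mulVecLin ≤ range A.mulVecLin ⊔ range C.mulVecLin := by
  rw [Matrix.rank, Matrix.rank, range_fromColumns', range_fromColumns', range_fromColumns']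
  set rA := range A.mulVecLin
  set rE := range E.mulVecLin
  set rC := range C.mulVecLin
  constructor
  · intro h
    have hle : rA ⊔ rC ≤ rA ⊔ (rE ⊔ rC) := sup_le_sup_left le_sup_right _
    have heq := Submodule.eq_of_le_of_finrank_eq hle h.symm
    calc rE ≤ rA ⊔ (rE ⊔ rC) := le_trans le_sup_left le_sup_right
      _ = rA ⊔ rC := heq.symm
  · intro h
    have : rA ⊔ (rE ⊔ rC) = rA ⊔ rC :=
      le_antisymm (sup_le le_sup_left (sup_le h le_sup_right)) (sup_le_sup_left le_sup_right _)
    rw [this]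

lemma rank_L2 {n q s m' : ℕ} (B : Matrix (Fin q) (Fin n) ℂ) (E : Matrix (Fin m') (Fin n) ℂ)
    (D : Matrix (Fin s) (Fin n) ℂ) :
    (fromRows B (fromRows E D)).rank = (fromRows B D).rank ↔
      ker B.mulVecLin ⊓ ker D.mulVecLin ≤ ker E.mulVecLin := by
  have h1 := LinearMap.finrank_range_add_finrank_ker (fromRows B (fromRows E D)).mulVecLin
  have h2 := LinearMap.finrank_range_add_finrank_ker (fromRows B D).mulVecLin
  rw [ker_fromRows', ker_fromRows'] at h1
  rw [ker_fromRows'] at h2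
  set kB := ker B.mulVecLin
  set kE := ker E.mulVecLin
  set kD := ker D.mulVecLin
  have hrank1 : (fromRows B (fromRows E D)).rank = finrank ℂ ↥(range (fromRows B (fromRows E D)).mulVecLin) := rfl
  have hrank2 : (fromRows B D).rank = finrank ℂ ↥(range (fromRows B D).mulVecLin) := rfl
  constructor
  · intro h
    have hfr : finrank ℂ ↥(kB ⊓ (kE ⊓ kD)) = finrank ℂ ↥(kB ⊓ kD) := by
      rw [hrank1, hrank2] at h
      omega
    have hle : kB ⊓ (kE ⊓ kD) ≤ kB ⊓ kD :=
      le_inf inf_le_left (le_trans inf_le_right inf_le_right)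
    have heq := Submodule.eq_of_le_of_finrank_eq hle hfr
    calc kB ⊓ kD = kB ⊓ (kE ⊓ kD) := heq.symm
      _ ≤ kE := le_trans inf_le_right inf_le_left
  · intro h
    have heq : kB ⊓ (kE ⊓ kD) = kB ⊓ kD := by
      apply le_antisymm (le_inf inf_le_left (le_trans inf_le_right inf_le_right))
      exact le_inf inf_le_left (le_inf h inf_le_right)
    rw [heq] at h1
    rw [hrank1, hrank2]
    omega

lemma finrank_range_eq_of_comp {V V' W W' : Type*}
    [AddCommGroup V] [Module ℂ V] [AddCommGroup V'] [Module ℂ V']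
    [AddCommGroup W] [Module ℂ W] [AddCommGroup W'] [Module ℂ W']
    (e₁ : V ≃ₗ[ℂ] V') (e₂ : W ≃ₗ[ℂ] W') (f : V →ₗ[ℂ] W) (g : V' →ₗ[ℂ] W')
    (h : ∀ x, g (e₁ x) = e₂ (f x)) :
    finrank ℂ ↥(range f) = finrank ℂ ↥(range g) := by
  have hg : g = e₂.toLinearMap ∘ₗ f ∘ₗ e₁.symm.toLinearMap := by
    ext v
    have := h (e₁.symm v)
    simp only [LinearEquiv.apply_symm_apply] at this
    simpa using this
  rw [hg, LinearMap.range_comp, LinearMap.range_comp, LinearEquiv.range, Submodule.map_top]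
  rw [LinearEquiv.finrank_map_eq]

lemma finrank_range_blockmap {V₁ V₂ W₁ W₂ : Type*}
    [AddCommGroup V₁] [Module ℂ V₁] [AddCommGroup V₂] [Module ℂ V₂]
    [AddCommGroup W₁] [Module ℂ W₁] [AddCommGroup W₂] [Module ℂ W₂]
    [FiniteDimensional ℂ W₁] [FiniteDimensional ℂ W₂]
    (P : V₁ →ₗ[ℂ] W₁) (Q : V₂ →ₗ[ℂ] W₁) (R : V₂ →ₗ[ℂ] W₂) :
    finrank ℂ ↥(range (LinearMap.prod (P.coprod Q) (R ∘ₗ LinearMap.snd ℂ V₁ V₂))) =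
      finrank ℂ ↥(range R) + finrank ℂ ↥(range P ⊔ Submodule.map Q (ker R)) := by
  set Φ : V₁ × V₂ →ₗ[ℂ] W₁ × W₂ := LinearMap.prod (P.coprod Q) (R ∘ₗ LinearMap.snd ℂ V₁ V₂)
    with hΦdef
  set ψ : ↥(range Φ) →ₗ[ℂ] W₂ := (LinearMap.snd ℂ W₁ W₂) ∘ₗ (range Φ).subtype with hψdef
  have h1 : finrank ℂ ↥(range Φ) = finrank ℂ ↥(range ψ) + finrank ℂ ↥(ker ψ) :=
    (LinearMap.finrank_range_add_finrank_ker ψ).symm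
  have hψr : range ψ = range R := by
    apply le_antisymm
    · rintro - ⟨⟨w, hw⟩, rfl⟩
      obtain ⟨⟨x, y⟩, rfl⟩ := hw
      exact ⟨y, rfl⟩
    · rintro - ⟨y, rfl⟩
      exact ⟨⟨Φ (0, y), ⟨(0, y), rfl⟩⟩, rfl⟩
  set θ : ↥(ker ψ) →ₗ[ℂ] W₁ :=
    (LinearMap.fst ℂ W₁ W₂) ∘ₗ (range Φ).subtype ∘ₗ (ker ψ).subtype with hθdef
  have hθker : ker θ = ⊥ := by
    rw [eq_bot_iff]
    intro a ha
    have h1' : ((a : ↥(range Φ)) : W₁ × W₂).1 = 0 := ha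
    have h2' : ((a : ↥(range Φ)) : W₁ × W₂).2 = 0 := a.2
    rw [Submodule.mem_bot]
    apply Subtype.ext
    apply Subtype.ext
    exact Prod.ext h1' h2'
  have hθr : range θ = range P ⊔ Submodule.map Q (ker R) := by
    apply le_antisymm
    · rintro - ⟨⟨⟨w, hw⟩, hz⟩, rfl⟩
      obtain ⟨⟨x, y⟩, rfl⟩ := hw
      have hy : R y = 0 := hz
      exact Submodule.add_mem_sup (⟨x, rfl⟩ : P x ∈ range P)
        (⟨y, hy, rfl⟩ : Q y ∈ Submodule.map Q (ker R))
    · intro w hw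
      rw [Submodule.mem_sup] at hw
      obtain ⟨a, ha, b, hb, rfl⟩ := hw
      obtain ⟨x, rfl⟩ := ha
      obtain ⟨y, hy, rfl⟩ := Submodule.mem_map.1 hb
      have hΦmem : Φ (x, y) ∈ range Φ := LinearMap.mem_range_self Φ _
      have hψ0 : ψ ⟨Φ (x, y), hΦmem⟩ = 0 := by
        show (Φ (x, y)).2 = 0
        show R y = 0
        exact hy
      exact ⟨⟨⟨Φ (x, y), hΦmem⟩, LinearMap.mem_ker.2 hψ0⟩, rfl⟩
  haveI : FiniteDimensional ℂ ↥(range Φ) := inferInstance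
  haveI : FiniteDimensional ℂ ↥(ker ψ) := inferInstance
  have h2 : finrank ℂ ↥(ker ψ) = finrank ℂ ↥(range θ) := by
    have := LinearMap.finrank_range_add_finrank_ker (K := ℂ) (V := ↥(ker ψ)) (V₂ := W₁) θ
    rw [hθker, finrank_bot ℂ ↥(ker ψ), add_zero] at this
    exact this.symm
  rw [h1, hψr, h2, hθr]

lemma rank_fromBlocks_upper {m n p s : ℕ} (A : Matrix (Fin m) (Fin p) ℂ)
    (E : Matrix (Fin m) (Fin n) ℂ) (D : Matrix (Fin s) (Fin n) ℂ) :
    (fromBlocks A E 0 D).rank = D.rank +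
      finrank ℂ ↥(range A.mulVecLin ⊔ Submodule.map E.mulVecLin (ker D.mulVecLin)) := by
  have hcomp : ∀ v, (LinearMap.prod ((A.mulVecLin).coprod E.mulVecLin)
        (D.mulVecLin ∘ₗ LinearMap.snd ℂ ((Fin p) → ℂ) ((Fin n) → ℂ)))
        ((LinearEquiv.sumArrowLequivProdArrow (Fin p) (Fin n) ℂ ℂ) v) =
      (LinearEquiv.sumArrowLequivProdArrow (Fin m) (Fin s) ℂ ℂ)
        ((fromBlocks A E 0 D).mulVecLin v) := by
    intro v
    refine Prod.ext ?_ ?_ <;>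
      · funext i
        simp [LinearEquiv.sumArrowLequivProdArrow, Equiv.sumArrowEquivProdArrow,
          mulVecLin_apply, fromBlocks_mulVec]
  rw [Matrix.rank, Matrix.rank, finrank_range_eq_of_comp _ _ _ _ hcomp,
    finrank_range_blockmap A.mulVecLin E.mulVecLin D.mulVecLin]

lemma rank_fromBlocks_lower {m n q r : ℕ} (B : Matrix (Fin q) (Fin n) ℂ)
    (E : Matrix (Fin m) (Fin n) ℂ) (C : Matrix (Fin m) (Fin r) ℂ) :
    (fromBlocks B 0 E C).rank = B.rank +
      finrank ℂ ↥(range C.mulVecLin ⊔ Submodule.map E.mulVecLin (ker B.mulVecLin)) := by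
  have hcomp : ∀ v, (LinearMap.prod ((C.mulVecLin).coprod E.mulVecLin)
        (B.mulVecLin ∘ₗ LinearMap.snd ℂ ((Fin r) → ℂ) ((Fin n) → ℂ)))
        (((LinearEquiv.sumArrowLequivProdArrow (Fin n) (Fin r) ℂ ℂ).trans
          (LinearEquiv.prodComm ℂ _ _)) v) =
      ((LinearEquiv.sumArrowLequivProdArrow (Fin q) (Fin m) ℂ ℂ).trans
          (LinearEquiv.prodComm ℂ _ _))
        ((fromBlocks B 0 E C).mulVecLin v) := by
    intro v
    refine Prod.ext ?_ ?_ <;>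
      · funext i
        simp [LinearEquiv.sumArrowLequivProdArrow, Equiv.sumArrowEquivProdArrow,
          mulVecLin_apply, fromBlocks_mulVec, add_comm]
  rw [Matrix.rank, Matrix.rank, finrank_range_eq_of_comp _ _ _ _ hcomp,
    finrank_range_blockmap C.mulVecLin E.mulVecLin B.mulVecLin]

lemma rank_L3 {m n p s : ℕ} (A : Matrix (Fin m) (Fin p) ℂ)
    (E : Matrix (Fin m) (Fin n) ℂ) (D : Matrix (Fin s) (Fin n) ℂ) :
    (fromBlocks A E 0 D).rank = A.rank + D.rank ↔
      Submodule.map E.mulVecLin (ker D.mulVecLin) ≤ range A.mulVecLin := by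
  rw [rank_fromBlocks_upper]
  set rA := range A.mulVecLin
  set mp := Submodule.map E.mulVecLin (ker D.mulVecLin)
  have hA : A.rank = finrank ℂ ↥rA := rfl
  constructor
  · intro h
    have hfr : finrank ℂ ↥(rA ⊔ mp) = finrank ℂ ↥rA := by
      rw [hA] at h; omega
    have heq := Submodule.eq_of_le_of_finrank_eq (le_sup_left : rA ≤ rA ⊔ mp) hfr.symm
    calc mp ≤ rA ⊔ mp := le_sup_right
      _ = rA := heq.symm
  · intro h
    have : rA ⊔ mp = rA := sup_eq_left.2 h
    rw [this, hA]
    omega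

lemma rank_L4 {m n q r : ℕ} (B : Matrix (Fin q) (Fin n) ℂ)
    (E : Matrix (Fin m) (Fin n) ℂ) (C : Matrix (Fin m) (Fin r) ℂ) :
    (fromBlocks B 0 E C).rank = B.rank + C.rank ↔
      Submodule.map E.mulVecLin (ker B.mulVecLin) ≤ range C.mulVecLin := by
  rw [rank_fromBlocks_lower]
  set rC := range C.mulVecLin
  set mp := Submodule.map E.mulVecLin (ker B.mulVecLin)
  have hC : C.rank = finrank ℂ ↥rC := rfl
  constructor
  · intro h
    have hfr : finrank ℂ ↥(rC ⊔ mp) = finrank ℂ ↥rC := by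
      rw [hC] at h; omega
    have heq := Submodule.eq_of_le_of_finrank_eq (le_sup_left : rC ≤ rC ⊔ mp) hfr.symm
    calc mp ≤ rC ⊔ mp := le_sup_right
      _ = rC := heq.symm
  · intro h
    have : rC ⊔ mp = rC := sup_eq_left.2 h
    rw [this, hC]

end RankLemmas

theorem two_sided_sylvester_solvable_iff_ranks {m n p q r s : ℕ}
    (A₁ : Matrix (Fin m) (Fin p) ℂ) (B₁ : Matrix (Fin q) (Fin n) ℂ)
    (C₁ : Matrix (Fin m) (Fin r) ℂ) (D₁ : Matrix (Fin s) (Fin n) ℂ)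
    (E₁ : Matrix (Fin m) (Fin n) ℂ) :
    (∃ (X₁ : Matrix (Fin p) (Fin q) ℂ) (X₂ : Matrix (Fin r) (Fin s) ℂ),
      A₁ * X₁ * B₁ + C₁ * X₂ * D₁ = E₁) ↔
    ((Matrix.fromCols A₁ (Matrix.fromCols E₁ C₁)).rank =
        (Matrix.fromCols A₁ C₁).rank ∧
     (Matrix.fromRows B₁ (Matrix.fromRows E₁ D₁)).rank =
        (Matrix.fromRows B₁ D₁).rank ∧
     (Matrix.fromBlocks A₁ E₁ 0 D₁).rank = A₁.rank + D₁.rank ∧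
     (Matrix.fromBlocks B₁ 0 E₁ C₁).rank = B₁.rank + C₁.rank) := by
  rw [rank_L1 A₁ E₁ C₁, rank_L2 B₁ E₁ D₁, rank_L3 A₁ E₁ D₁, rank_L4 B₁ E₁ C₁]
  rw [← solvable_iff_subspaces A₁.mulVecLin B₁.mulVecLin C₁.mulVecLin D₁.mulVecLin E₁.mulVecLin]
  constructor
  · rintro ⟨X₁, X₂, hX⟩
    refine ⟨X₁.mulVecLin, X₂.mulVecLin, ?_⟩
    have := congrArg Matrix.mulVecLin hX
    rw [Matrix.mulVecLin_add, Matrix.mulVecLin_mul, Matrix.mulVecLin_mul,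
      Matrix.mulVecLin_mul, Matrix.mulVecLin_mul] at this
    rw [← this]
    rw [LinearMap.comp_assoc, LinearMap.comp_assoc]
  · rintro ⟨X, Y, hXY⟩
    refine ⟨LinearMap.toMatrix' X, LinearMap.toMatrix' Y, ?_⟩
    apply Matrix.toLin'.injective
    rw [Matrix.toLin'_apply', Matrix.toLin'_apply']
    rw [Matrix.mulVecLin_add, Matrix.mulVecLin_mul, Matrix.mulVecLin_mul,
      Matrix.mulVecLin_mul, Matrix.mulVecLin_mul]
    have hX : (LinearMap.toMatrix' X).mulVecLin = X := by
      rw [← Matrix.toLin'_apply', Matrix.toLin'_toMatrix']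
    have hY : (LinearMap.toMatrix' Y).mulVecLin = Y := by
      rw [← Matrix.toLin'_apply', Matrix.toLin'_toMatrix']
    rw [hX, hY, LinearMap.comp_assoc, LinearMap.comp_assoc]
    exact hXY
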